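/- Let r, σ, b > 0, a ∈ ℝ, and let δ > 0 satisfy a + δ > 0. Set c = min(σ, 1, b/2), η = (σ + δ·r)/(a + δ), and V(x, y, z) = x² + δ·y² + (a + δ)·(z − η)². Then for every (x, y, z) ∈ ℝ³ the derivative of V along the vector field f of the Lorenz-like system satisfies ∇V(x, y, z) · f(x, y, z) ≤ −2c·V(x, y, z) + b·(σ + δ·r)²/(a + δ). -/

import Mathlib

/-- Lyapunov-type differential inequality for the Lorenz-like system: with
`V(x,y,z) = x² + δy² + (a+δ)(z−η)²`, `η = (σ+δr)/(a+δ)` and `c = min(σ,1,b/2)`,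
the derivative of `V` along the vector field satisfies
`∇V·f ≤ −2cV + b(σ+δr)²/(a+δ)` everywhere. -/
theorem stmt_11 (r σ b a δ : ℝ) (hr : 0 < r) (hσ : 0 < σ) (hb : 0 < b)
    (hδ : 0 < δ) (haδ : 0 < a + δ) :
    let c := min σ (min 1 (b / 2))
    let η := (σ + δ * r) / (a + δ)
    ∀ x y z : ℝ,
      2 * x * (-σ * (x - y) - a * y * z)
        + 2 * (δ * y) * (r * x - y - x * z)
        + 2 * ((a + δ) * (z - η)) * (-b * z + x * y)
      ≤ -2 * c * (x ^ 2 + δ * y ^ 2 + (a + δ) * (z - η) ^ 2)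
          + b * (σ + δ * r) ^ 2 / (a + δ) := by
  intro c η x y z
  have hc1 : c ≤ σ := min_le_left _ _
  have hc2 : c ≤ 1 := le_trans (min_le_right _ _) (min_le_left _ _)
  have hc3 : c ≤ b / 2 := le_trans (min_le_right _ _) (min_le_right _ _)
  have hη : (a + δ) * η = σ + δ * r := by
    simp only [η]; field_simp
  have hrhs : b * (σ + δ * r) ^ 2 / (a + δ) = b * (a + δ) * η ^ 2 := by
    rw [← hη]; field_simp
  rw [hrhs]
  have key : 2 * x * (-σ * (x - y) - a * y * z)
        + 2 * (δ * y) * (r * x - y - x * z)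
        + 2 * ((a + δ) * (z - η)) * (-b * z + x * y)
      = -2*σ*x^2 - 2*δ*y^2 - 2*b*(a+δ)*(z-η)^2 - 2*b*((a+δ)*η)*(z-η) := by
    linear_combination (-2*x*y) * hη
  rw [key]
  nlinarith [sq_nonneg x, sq_nonneg y, sq_nonneg (z - η), sq_nonneg z,
    mul_nonneg hb.le (sq_nonneg z),
    mul_nonneg (mul_nonneg hb.le haδ.le) (sq_nonneg z),
    mul_nonneg (sub_nonneg.2 hc1) (sq_nonneg x),
    mul_nonneg (mul_nonneg (sub_nonneg.2 hc2) hδ.le) (sq_nonneg y),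
    mul_nonneg (mul_nonneg (by linarith : (0:ℝ) ≤ b - 2*c) haδ.le) (sq_nonneg (z - η))]
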